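/- Let ρ_- > 0, ρ_+ > 0 and u_- > u_+. With ρ_*(γ) = (u_- - u_+ + ρ_-^γ)^{1/γ}, σ_1(γ) = u_+ - ρ_-(u_- - u_+)/(ρ_*(γ) - ρ_-) and σ_2 = u_+, one has lim_{γ→0+} ∫_{σ_1(γ)}^{σ_2} ρ_*(γ) dξ = lim_{γ→0+} ρ_*(γ)(σ_2 - σ_1(γ)) = ρ_-(u_- - u_+) ≠ 0. -/
import Mathlib


open Filter Topology MeasureTheory

/-- The intermediate density of the Aw–Rascle Riemann solution:
`ρ_*(γ) = (u_- - u_+ + ρ_-^γ)^(1/γ)`. -/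
noncomputable def rhoStar (ρm um up γ : ℝ) : ℝ := (um - up + ρm ^ γ) ^ (1 / γ)

/-- The 1-shock speed `σ_1(γ) = u_+ - ρ_-(u_- - u_+)/(ρ_*(γ) - ρ_-)`. -/
noncomputable def sigma1 (ρm um up γ : ℝ) : ℝ :=
  up - ρm * (um - up) / (rhoStar ρm um up γ - ρm)

lemma rhoStar_tendsto_atTop (ρm um up : ℝ) (hρm : 0 < ρm) (hu : up < um) :
    Tendsto (fun γ : ℝ => rhoStar ρm um up γ) (𝓝[>] (0:ℝ)) atTop := by
  set c : ℝ := um - up with hc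
  have hcpos : 0 < c := sub_pos.2 hu
  -- base tends to c + 1
  have hbase : Tendsto (fun γ : ℝ => um - up + ρm ^ γ) (𝓝[>] (0:ℝ)) (𝓝 (c + 1)) := by
    have hcont : Tendsto (fun γ : ℝ => um - up + ρm ^ γ) (𝓝 (0:ℝ)) (𝓝 (c + 1)) := by
      have heq : (fun γ : ℝ => um - up + ρm ^ γ)
          = fun γ => um - up + Real.exp (Real.log ρm * γ) := by
        funext γ; rw [Real.rpow_def_of_pos hρm]
      rw [heq]
      have : Continuous fun γ : ℝ => um - up + Real.exp (Real.log ρm * γ) := by fun_prop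
      simpa using this.tendsto 0
    exact hcont.mono_left nhdsWithin_le_nhds
  have hb1 : (1:ℝ) < 1 + c / 2 := by linarith
  have hbge : ∀ᶠ γ in 𝓝[>] (0:ℝ), 1 + c / 2 ≤ um - up + ρm ^ γ := by
    filter_upwards [hbase.eventually (eventually_gt_nhds (by linarith : 1 + c/2 < c + 1))]
      with γ hγ using hγ.le
  have hexp : Tendsto (fun γ : ℝ => (1 + c / 2) ^ (1 / γ)) (𝓝[>] (0:ℝ)) atTop := by
    have hlog : 0 < Real.log (1 + c / 2) := Real.log_pos hb1
    have h1 : Tendsto (fun x : ℝ => (1 + c / 2) ^ x) atTop atTop := by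
      have : (fun x : ℝ => (1 + c / 2) ^ x)
          = fun x => Real.exp (Real.log (1 + c / 2) * x) := by
        funext x; rw [Real.rpow_def_of_pos (by linarith)]
      rw [this]
      exact Real.tendsto_exp_atTop.comp
        ((tendsto_const_mul_atTop_of_pos hlog).mpr tendsto_id)
    have h2 : Tendsto (fun γ : ℝ => 1 / γ) (𝓝[>] (0:ℝ)) atTop := by
      simpa [one_div] using tendsto_inv_nhdsGT_zero
    exact h1.comp h2
  refine tendsto_atTop_mono' _ ?_ hexp
  filter_upwards [hbge, self_mem_nhdsWithin] with γ hγ (hγ0 : 0 < γ)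
  exact Real.rpow_le_rpow (by linarith) hγ (by positivity)

theorem stmt2 (ρm ρp um up : ℝ) (hρm : 0 < ρm) (hρp : 0 < ρp) (hu : up < um) :
    Tendsto (fun γ : ℝ => ∫ _ξ in (sigma1 ρm um up γ)..up, rhoStar ρm um up γ)
      (𝓝[>] 0) (𝓝 (ρm * (um - up))) ∧
    Tendsto (fun γ : ℝ => rhoStar ρm um up γ * (up - sigma1 ρm um up γ))
      (𝓝[>] 0) (𝓝 (ρm * (um - up))) ∧
    ρm * (um - up) ≠ 0 := by
  have hrt := rhoStar_tendsto_atTop ρm um up hρm hu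
  have h1 : Tendsto (fun r : ℝ => ρm * (um - up) * (1 + ρm * (r - ρm)⁻¹)) atTop
      (𝓝 (ρm * (um - up))) := by
    have hinv : Tendsto (fun r : ℝ => (r - ρm)⁻¹) atTop (𝓝 0) :=
      (tendsto_atTop_add_const_right _ (-ρm) tendsto_id).inv_tendsto_atTop
    have h2 : Tendsto (fun r : ℝ => 1 + ρm * (r - ρm)⁻¹) atTop (𝓝 (1 + ρm * 0)) :=
      tendsto_const_nhds.add (hinv.const_mul ρm)
    simpa using h2.const_mul (ρm * (um - up))
  have key : Tendsto (fun γ : ℝ => rhoStar ρm um up γ * (up - sigma1 ρm um up γ))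
      (𝓝[>] 0) (𝓝 (ρm * (um - up))) := by
    refine (h1.comp hrt).congr' ?_
    filter_upwards [hrt.eventually (eventually_gt_atTop ρm)] with γ hγ
    have hne : rhoStar ρm um up γ - ρm ≠ 0 := by linarith
    simp only [Function.comp, sigma1]
    field_simp
    ring
  refine ⟨?_, key, ?_⟩
  · refine key.congr fun γ => ?_
    rw [intervalIntegral.integral_const, smul_eq_mul, mul_comm]
  · exact ne_of_gt (mul_pos hρm (sub_pos.2 hu))
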